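/- arXiv:1008.4852 — 5 statements merged into one kernel-verified Lean document; each statement's English description precedes it below -/
import Mathlib

section
/- Let X be a topological space and let G ⊆ X be a dense subset such that the singleton {t} is closed in X for every t ∈ G. Then for every open subset V ⊆ X, the boundary, computed in the subspace topology of G, of the set cl_G(V ∩ G) equals ∂_X(cl_X(V)) ∩ G; that is, ∂_G( cl_G(V ∩ G) ) = ∂_X( cl_X(V) ) ∩ G. -/
open Set

/-- Lemma 4.5(iii): If `G` is a dense subset of a topological space `X` consisting of closed
points, then for every open `V ⊆ X`, the boundary in the subspace `G` of the set
`cl_G(V ∩ G)` equals `∂_X(cl_X(V)) ∩ G`. -/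
theorem stmt_3 (X : Type*) [TopologicalSpace X] (G : Set X)
    (hGdense : Dense G) (hGclosed : ∀ t ∈ G, IsClosed ({t} : Set X))
    (V : Set X) (hV : IsOpen V) :
    Subtype.val '' frontier (closure ((Subtype.val : G → X) ⁻¹' V)) =
      frontier (closure V) ∩ G := by
  have hclVG : closure (V ∩ G) = closure V := by
    refine subset_antisymm (closure_mono inter_subset_left) ?_
    have h1 : V ⊆ closure (V ∩ G) := hGdense.open_subset_closure_inter hV
    calc closure V ⊆ closure (closure (V ∩ G)) := closure_mono h1
      _ = closure (V ∩ G) := closure_closure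
  have himg : ∀ s : Set X, (Subtype.val : G → X) '' (Subtype.val ⁻¹' s) = s ∩ G := by
    intro s
    rw [Subtype.image_preimage_coe, inter_comm]
  -- closure in subspace of V∩G is val⁻¹(closure V)
  have hcl : closure ((Subtype.val : G → X) ⁻¹' V) = Subtype.val ⁻¹' (closure V) := by
    ext x
    rw [closure_subtype, mem_preimage, himg, hclVG]
  -- interior in subspace of val⁻¹(closure V)
  have hint : interior ((Subtype.val : G → X) ⁻¹' (closure V)) =
      Subtype.val ⁻¹' (interior (closure V)) := by
    refine subset_antisymm ?_ (preimage_interior_subset_interior_preimage continuous_subtype_val)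
    intro x hx
    rw [mem_interior_iff_mem_nhds, nhds_induced, Filter.mem_comap] at hx
    obtain ⟨t, ht, hts⟩ := hx
    have hU : IsOpen (interior t) := isOpen_interior
    have hxU : (x : X) ∈ interior t := mem_interior_iff_mem_nhds.2 ht
    have hUG : interior t ∩ G ⊆ closure V := by
      rintro y ⟨hy1, hy2⟩
      exact hts (show ((⟨y, hy2⟩ : G) : X) ∈ t from interior_subset hy1)
    have hU2 : interior t ⊆ closure V := by
      calc interior t ⊆ closure (interior t ∩ G) := hGdense.open_subset_closure_inter hU
        _ ⊆ closure (closure V) := closure_mono hUG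
        _ = closure V := closure_closure
    exact mem_preimage.2 (mem_interior.2 ⟨interior t, hU2, hU, hxU⟩)
  -- closure in subspace of val⁻¹(closure V) is itself
  have hcl2 : closure ((Subtype.val : G → X) ⁻¹' (closure V)) =
      Subtype.val ⁻¹' (closure V) := by
    refine subset_antisymm ?_ subset_closure
    intro x hx
    rw [closure_subtype, himg] at hx
    have : closure (closure V ∩ G) ⊆ closure V := by
      calc closure (closure V ∩ G) ⊆ closure (closure V) := closure_mono inter_subset_left
        _ = closure V := closure_closure
    exact this hx
  have hfr : frontier (closure ((Subtype.val : G → X) ⁻¹' V)) =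
      (Subtype.val : G → X) ⁻¹' frontier (closure V) := by
    rw [hcl, frontier, hcl2, hint, isClosed_closure.frontier_eq, preimage_diff]
  rw [hfr, himg]
end

section
/- Let X be a second countable, locally compact Hausdorff topological space with no isolated points. Then every nonempty open subset O ⊆ X contains a nonempty open subset U ⊆ O (open in X) whose boundary in X is nonempty, i.e., whose closure in X is not open. -/
open Metric Set Filter Topology

/-- In a second countable, locally compact Hausdorff space with no isolated points, every
nonempty open subset `O` contains a nonempty open subset `U` whose closure is not open
(equivalently, whose boundary is nonempty). -/
theorem stmt_5 (X : Type*) [TopologicalSpace X] [SecondCountableTopology X]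
    [LocallyCompactSpace X] [T2Space X]
    (hX : ∀ x : X, ¬ IsOpen ({x} : Set X)) :
    ∀ O : Set X, IsOpen O → O.Nonempty →
      ∃ U : Set X, IsOpen U ∧ U ⊆ O ∧ U.Nonempty ∧ ¬ IsOpen (closure U) := by
  intro O hO hOne
  by_contra hcon
  push_neg at hcon
  letI : MetricSpace X := TopologicalSpace.metrizableSpaceMetric X
  obtain ⟨x, hx⟩ := hOne
  -- every point of O has arbitrarily small clopen neighborhoods inside O
  have key : ∀ y ∈ O, ∀ ε : ℝ, 0 < ε → ∃ C : Set X,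
      y ∈ C ∧ IsOpen C ∧ C ⊆ O ∧ C ⊆ Metric.ball y ε := by
    intro y hy ε hε
    have hWopen : IsOpen (O ∩ Metric.ball y ε) := hO.inter Metric.isOpen_ball
    have hyW : y ∈ O ∩ Metric.ball y ε := ⟨hy, Metric.mem_ball_self hε⟩
    obtain ⟨K, hKc, hyK, hKW⟩ := exists_compact_subset hWopen hyW
    have hsub : closure (interior K) ⊆ K :=
      closure_minimal interior_subset hKc.isClosed
    refine ⟨closure (interior K), subset_closure hyK, ?_, ?_, ?_⟩
    · exact hcon _ isOpen_interior
        ((interior_subset.trans hKW).trans inter_subset_left) ⟨y, hyK⟩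
    · exact hsub.trans (hKW.trans inter_subset_left)
    · exact hsub.trans (hKW.trans inter_subset_right)
  -- x is not isolated: points of O arbitrarily close to x, distinct from x
  have hz : ∀ r : ℝ, 0 < r → ∃ y : X, y ∈ O ∧ y ≠ x ∧ dist y x < r := by
    intro r hr
    by_contra hne
    push_neg at hne
    apply hX x
    have heq : O ∩ Metric.ball x r = {x} := by
      apply subset_antisymm
      · rintro w ⟨hwO, hwb⟩
        by_contra hwx
        exact absurd (Metric.mem_ball.1 hwb) (not_lt.2 (hne w hwO hwx))
      · rintro w rfl
        exact ⟨hx, Metric.mem_ball_self hr⟩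
    rw [← heq]
    exact hO.inter Metric.isOpen_ball
  classical
  set z : ℝ → X := fun r => if h : 0 < r then (hz r h).choose else x with hzdef
  have hzp : ∀ r : ℝ, (h : 0 < r) → z r ∈ O ∧ z r ≠ x ∧ dist (z r) x < r := by
    intro r h
    simp only [hzdef, dif_pos h]
    exact (hz r h).choose_spec
  set r : ℕ → ℝ := fun n => Nat.rec 1 (fun _ rr => dist (z rr) x / 3) n with hrdef
  have hr0 : r 0 = 1 := rfl
  have hrs : ∀ n, r (n + 1) = dist (z (r n)) x / 3 := fun n => rfl
  have hrpos : ∀ n, 0 < r n := by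
    intro n
    induction n with
    | zero => norm_num [hr0]
    | succ n ih =>
      rw [hrs]
      have := (hzp (r n) ih).2.1
      have : dist (z (r n)) x > 0 := dist_pos.2 this
      linarith
  set y : ℕ → X := fun n => z (r n) with hydef
  set d : ℕ → ℝ := fun n => dist (y n) x with hddef
  have hyO : ∀ n, y n ∈ O := fun n => (hzp (r n) (hrpos n)).1
  have hynx : ∀ n, y n ≠ x := fun n => (hzp (r n) (hrpos n)).2.1
  have hdpos : ∀ n, 0 < d n := fun n => dist_pos.2 (hynx n)
  have hdr : ∀ n, d n < r n := fun n => (hzp (r n) (hrpos n)).2.2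
  have hrs' : ∀ n, r (n + 1) = d n / 3 := fun n => hrs n
  have hdec : ∀ n, d (n + 1) < d n / 3 := by
    intro n
    have := hdr (n + 1)
    rw [hrs'] at this
    exact this
  have hanti : ∀ m n, m ≤ n → d n ≤ d m := by
    intro m n hmn
    induction n with
    | zero => simp_all
    | succ n ih =>
      rcases Nat.lt_or_ge m (n + 1) with h | h
      · have h1 := ih (Nat.lt_succ_iff.1 h)
        have h2 := hdec n
        have h3 := hdpos n
        linarith
      · have : m = n + 1 := le_antisymm hmn h
        simp [this]
  have hbound : ∀ n, d n ≤ d 0 * (1/3 : ℝ) ^ n := by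
    intro n
    induction n with
    | zero => simp
    | succ n ih =>
      have := hdec n
      have : d (n+1) ≤ (d 0 * (1/3)^n) / 3 := by linarith
      calc d (n+1) ≤ (d 0 * (1/3)^n) / 3 := this
        _ = d 0 * (1/3)^(n+1) := by ring
  have hdto : Tendsto d atTop (nhds 0) := by
    apply squeeze_zero (fun n => (hdpos n).le) hbound
    have : Tendsto (fun n : ℕ => (1/3 : ℝ)^n) atTop (nhds 0) :=
      tendsto_pow_atTop_nhds_zero_of_lt_one (by norm_num) (by norm_num)
    simpa using this.const_mul (d 0)
  -- small clopen sets around each y n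
  choose D hyD hDopen hDO hDball using fun n => key (y n) (hyO n) (d n / 4)
    (by have := hdpos n; linarith)
  -- the D's are pairwise disjoint, and avoid x
  have hdisj : ∀ m n, m < n → ∀ w, w ∈ D m → w ∉ D n := by
    intro m n hmn w hwm hwn
    have h1 : dist w (y m) < d m / 4 := Metric.mem_ball.1 (hDball m hwm)
    have h2 : dist w (y n) < d n / 4 := Metric.mem_ball.1 (hDball n hwn)
    have t1 : d m ≤ dist (y m) w + dist w x := dist_triangle (y m) w x
    have t2 : dist w x ≤ dist w (y n) + d n := dist_triangle w (y n) x
    have hle : d n ≤ d (m + 1) := hanti (m+1) n hmn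
    have hstep : d (m+1) < d m / 3 := hdec m
    have hsym : dist (y m) w = dist w (y m) := dist_comm _ _
    have hp := hdpos m
    linarith
  -- the union of even-indexed pieces
  set U : Set X := ⋃ n, D (2 * n) with hUdef
  have hUo : IsOpen U := isOpen_iUnion fun n => hDopen _
  have hUO : U ⊆ O := iUnion_subset fun n => hDO _
  have hUne : U.Nonempty := ⟨y (2 * 0), mem_iUnion.2 ⟨0, hyD (2 * 0)⟩⟩
  have hUcl := hcon U hUo hUO hUne
  -- x ∈ closure U
  have hxcl : x ∈ closure U := by
    rw [Metric.mem_closure_iff]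
    intro ε hε
    obtain ⟨n, hn⟩ := (hdto.eventually (eventually_lt_nhds hε)).exists
    refine ⟨y (2 * n), mem_iUnion.2 ⟨n, hyD (2 * n)⟩, ?_⟩
    have : d (2 * n) ≤ d n := hanti n (2 * n) (by omega)
    have hdist : dist (y (2*n)) x = d (2*n) := rfl
    rw [dist_comm, hdist]
    linarith
  -- but x is not in the interior of closure U
  obtain ⟨δ, hδ, hball⟩ := Metric.isOpen_iff.1 hUcl x hxcl
  obtain ⟨n, hn⟩ := (hdto.eventually (eventually_lt_nhds hδ)).exists
  have h2n : d (2 * n + 1) ≤ d n := hanti n (2 * n + 1) (by omega)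
  have hymem : y (2 * n + 1) ∈ closure U := by
    apply hball
    rw [Metric.mem_ball]
    have : dist (y (2*n+1)) x = d (2*n+1) := rfl
    rw [this]; linarith
  obtain ⟨w, hw1, hw2⟩ := mem_closure_iff.1 hymem (D (2*n+1)) (hDopen _) (hyD _)
  obtain ⟨m, hwm⟩ := mem_iUnion.1 hw2
  rcases lt_trichotomy (2*m) (2*n+1) with h | h | h
  · exact hdisj _ _ h w hwm hw1
  · omega
  · exact hdisj _ _ h w hw1 hwm
end

section
/- Let X be a nonempty second countable, locally compact Hausdorff topological space. Then X has no isolated points if and only if X contains a dense G_δ subset with empty interior. -/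
/-- Remark 3.4: A nonempty second countable, locally compact Hausdorff space has no
isolated points if and only if it contains a dense `Gδ` subset with empty interior. -/
theorem stmt_6 (X : Type*) [TopologicalSpace X] [SecondCountableTopology X]
    [LocallyCompactSpace X] [T2Space X] [Nonempty X] :
    (∀ x : X, ¬ IsOpen ({x} : Set X)) ↔
      ∃ D : Set X, IsGδ D ∧ Dense D ∧ interior D = ∅ := by
  constructor
  · intro h
    obtain ⟨S, hSc, hSd⟩ := TopologicalSpace.exists_countable_dense X
    refine ⟨Sᶜ, hSc.isGδ_compl, ?_, ?_⟩
    · have : Sᶜ = ⋂ x ∈ S, ({x}ᶜ : Set X) := by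
        ext y; simp only [Set.mem_compl_iff, Set.mem_iInter, Set.mem_singleton_iff]; exact ⟨fun h i hi e => h (e ▸ hi), fun h hy => h y hy rfl⟩
      rw [this]
      refine dense_biInter_of_isOpen (fun x _ => isOpen_compl_singleton)
        hSc (fun x _ => ?_)
      exact dense_compl_singleton_iff_not_open.2 (h x)
    · rw [interior_eq_empty_iff_dense_compl, compl_compl]
      exact hSd
  · rintro ⟨D, _, hDd, hDi⟩ x hx
    have hxD : x ∈ D := by
      rcases hDd.inter_open_nonempty {x} hx ⟨x, rfl⟩ with ⟨y, hy, hyD⟩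
      cases hy; exact hyD
    have : x ∈ interior D := mem_interior.2 ⟨{x}, by simpa using hxD, hx, rfl⟩
    simp [hDi] at this
end

section
/- Let X be a topological space, let U ⊆ X be open, and let V ⊆ X be open with cl(V) ⊆ U. Suppose that cl(V) is not open in X. Then for every ε with 0 < ε < 1/2 there is no continuous function f : U → ℝ (U with the subspace topology) satisfying f(t) ≥ 1 − ε for all t ∈ V and f(t) ≤ ε for all t ∈ U \ cl(V). -/
/-- Key step of Theorem 3.3: if `U` is open, `V` is open with `cl(V) ⊆ U` and `cl(V)` not
open, then for `0 < ε < 1/2` there is no continuous `f : U → ℝ` with `f ≥ 1 - ε` on `V`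
and `f ≤ ε` on `U \ cl(V)`. -/
theorem stmt_7 (X : Type*) [TopologicalSpace X] (U V : Set X)
    (hU : IsOpen U) (hV : IsOpen V) (hVU : closure V ⊆ U)
    (hnotopen : ¬ IsOpen (closure V))
    (ε : ℝ) (hε0 : 0 < ε) (hε : ε < 1 / 2) :
    ¬ ∃ f : U → ℝ, Continuous f ∧
        (∀ t : U, (t : X) ∈ V → 1 - ε ≤ f t) ∧
        (∀ t : U, (t : X) ∉ closure V → f t ≤ ε) := by
  rintro ⟨f, hf, h1, h2⟩
  -- find a boundary point of closure V
  have : ¬ ∀ x ∈ closure V, closure V ∈ nhds x := by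
    intro h
    exact hnotopen (isOpen_iff_mem_nhds.mpr h)
  push_neg at this
  obtain ⟨x, hxc, hxn⟩ := this
  have hxi : x ∉ interior (closure V) := fun h => hxn (mem_interior_iff_mem_nhds.mp h)
  have hxcc : x ∈ closure (closure V)ᶜ := by
    rw [closure_compl]; exact hxi
  have hxU : x ∈ U := hVU hxc
  set x' : U := ⟨x, hxU⟩
  have hVsubU : V ⊆ U := subset_trans subset_closure hVU
  -- f x' ≥ 1 - ε
  have hA : 1 - ε ≤ f x' := by
    have hC : IsClosed {t : U | 1 - ε ≤ f t} := isClosed_le continuous_const hf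
    have hsub : (Subtype.val ⁻¹' V : Set U) ⊆ {t : U | 1 - ε ≤ f t} := fun t ht => h1 t ht
    have hx'cl : x' ∈ closure (Subtype.val ⁻¹' V : Set U) := by
      rw [closure_subtype]
      have : (Subtype.val '' (Subtype.val ⁻¹' V : Set U)) = V := by
        rw [Subtype.image_preimage_coe]
        exact Set.inter_eq_self_of_subset_right hVsubU
      rw [this]; exact hxc
    exact hC.closure_subset_iff.mpr hsub hx'cl
  -- f x' ≤ ε
  have hB : f x' ≤ ε := by
    have hC : IsClosed {t : U | f t ≤ ε} := isClosed_le hf continuous_const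
    have hsub : (Subtype.val ⁻¹' (closure V)ᶜ : Set U) ⊆ {t : U | f t ≤ ε} :=
      fun t ht => h2 t ht
    have hx'cl : x' ∈ closure (Subtype.val ⁻¹' (closure V)ᶜ : Set U) := by
      rw [closure_subtype]
      have him : (Subtype.val '' (Subtype.val ⁻¹' (closure V)ᶜ : Set U)) = U ∩ (closure V)ᶜ := by
        rw [Subtype.image_preimage_coe, Set.inter_comm]
      rw [him]
      exact hU.inter_closure ⟨hxU, hxcc⟩
    exact hC.closure_subset_iff.mpr hsub hx'cl
  linarith
end

section
/- Let X be a second countable, locally compact Hausdorff topological space with no isolated points. Then for every nonempty open subset V' ⊆ X there exists a nonempty open subset V ⊆ X such that cl(V) ⊆ V' and cl(V) is not open in X. -/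
open Metric Set

theorem aux_metric {X : Type*} [MetricSpace X]
    (hX : ∀ x : X, ¬ IsOpen ({x} : Set X)) :
    ∀ V' : Set X, IsOpen V' → V'.Nonempty →
      ∃ V : Set X, IsOpen V ∧ V.Nonempty ∧ closure V ⊆ V' ∧ ¬ IsOpen (closure V) := by
  rintro V' hV' ⟨x, hx⟩
  obtain ⟨ε, hε, hball⟩ := Metric.isOpen_iff.1 hV' x hx
  -- points arbitrarily close to x, distinct from x
  have H : ∀ δ : ℝ, 0 < δ → ∃ z : X, z ≠ x ∧ dist z x < δ := by
    intro δ hδ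
    by_contra h
    push_neg at h
    apply hX x
    have heq : ({x} : Set X) = Metric.ball x δ := by
      apply subset_antisymm
      · intro w hw; simp at hw; subst hw; simpa using hδ
      · intro w hw
        simp only [Metric.mem_ball] at hw
        by_contra hwx
        exact absurd hw (not_lt.2 (h w (by simpa using hwx)))
    rw [heq]; exact Metric.isOpen_ball
  choose g hg1 hg2 using H
  -- recursively build a sequence of points approaching x with rapidly decreasing distances
  have hε3 : (0:ℝ) < ε / 3 := by linarith
  set step : X → X := fun p => if h : 0 < dist p x / 2 then g _ h else p with hstep
  set z : ℕ → X := fun n => step^[n] (g (ε/3) hε3) with hzdef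
  have key : ∀ p : X, p ≠ x → step p ≠ x ∧ dist (step p) x < dist p x / 2 := by
    intro p hp
    have hd : 0 < dist p x / 2 := by have := dist_pos.2 hp; linarith
    rw [hstep]
    simp only [dif_pos hd]
    exact ⟨hg1 _ hd, hg2 _ hd⟩
  have hz0 : z 0 = g (ε/3) hε3 := by simp [hzdef]
  have hzsucc : ∀ n, z (n+1) = step (z n) := by
    intro n; simp [hzdef, Function.iterate_succ_apply']
  have hne : ∀ n, z n ≠ x := by
    intro n
    induction n with
    | zero => rw [hz0]; exact hg1 _ _
    | succ k ih => rw [hzsucc]; exact (key _ ih).1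
  set r : ℕ → ℝ := fun n => dist (z n) x with hrdef
  have hr0 : ∀ n, 0 < r n := fun n => dist_pos.2 (hne n)
  have hrhalf : ∀ n, r (n+1) < r n / 2 := by
    intro n
    have := (key _ (hne n)).2
    simpa [hrdef, hzsucc n] using this
  have hrε : r 0 < ε / 3 := by
    have := hg2 (ε/3) hε3
    simpa [hrdef, hz0] using this
  have anti : StrictAnti r :=
    strictAnti_nat_of_succ_lt (fun n => lt_of_lt_of_le (hrhalf n) (by have := hr0 n; linarith))
  have hrmono : ∀ i j, i < j → (3/2) * r j < (3/4) * r i := by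
    intro i j hij
    have h1 : r j ≤ r (i+1) := anti.antitone (Nat.succ_le_of_lt hij)
    have h2 := hrhalf i
    linarith
  have hrbound : ∀ n, r n ≤ r 0 / 2 ^ n := by
    intro n
    induction n with
    | zero => simp
    | succ k ih =>
      have h1 := hrhalf k
      have h2 : r 0 / 2 ^ (k+1) = (r 0 / 2 ^ k) / 2 := by rw [pow_succ]; ring
      linarith
  have hrtend : ∀ δ : ℝ, 0 < δ → ∃ n, r (2*n) < δ := by
    intro δ hδ
    obtain ⟨n, hn⟩ := pow_unbounded_of_one_lt (r 0 / δ) (one_lt_two (α := ℝ))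
    refine ⟨n, ?_⟩
    have hpow : (0:ℝ) < 2 ^ n := by positivity
    have h1 : r 0 / 2 ^ n < δ := by
      rw [div_lt_iff₀ hpow]
      rw [div_lt_iff₀ hδ] at hn
      linarith [hn]
    have h2 : r (2*n) ≤ r 0 / 2 ^ (2*n) := hrbound (2*n)
    have h3 : (2:ℝ) ^ n ≤ 2 ^ (2*n) := by
      apply pow_le_pow_right₀ (by norm_num)
      omega
    have h4 : r 0 / 2 ^ (2*n) ≤ r 0 / 2 ^ n := by
      apply div_le_div_of_nonneg_left (le_of_lt (hr0 0)) hpow h3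
    linarith
  -- the intervals and the two disjoint open sets
  set J : ℕ → Set ℝ := fun n => Set.Ioo ((3/4) * r n) ((3/2) * r n) with hJdef
  have hJdisj : ∀ i j, i < j → ∀ t, t ∈ J i → t ∉ J j := by
    intro i j hij t hti htj
    have := hrmono i j hij
    rw [hJdef] at hti htj
    obtain ⟨h1, h2⟩ := hti
    obtain ⟨h3, h4⟩ := htj
    linarith
  have hmemJ : ∀ n, r n ∈ J n := by
    intro n
    have := hr0 n
    exact ⟨by linarith, by linarith⟩
  set A : Set X := (fun w => dist w x) ⁻¹' (⋃ n, J (2*n)) with hAdef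
  set B : Set X := (fun w => dist w x) ⁻¹' (⋃ n, J (2*n+1)) with hBdef
  have hcont : Continuous (fun w : X => dist w x) := continuous_id.dist continuous_const
  have hAopen : IsOpen A := (isOpen_iUnion (fun n => isOpen_Ioo)).preimage hcont
  have hBopen : IsOpen B := (isOpen_iUnion (fun n => isOpen_Ioo)).preimage hcont
  have hzA : ∀ n, z (2*n) ∈ A := by
    intro n
    rw [hAdef]
    exact Set.mem_preimage.2 (Set.mem_iUnion.2 ⟨n, hmemJ (2*n)⟩)
  have hzB : ∀ n, z (2*n+1) ∈ B := by
    intro n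
    rw [hBdef]
    exact Set.mem_preimage.2 (Set.mem_iUnion.2 ⟨n, hmemJ (2*n+1)⟩)
  have hAB : ∀ w, w ∈ A → w ∉ B := by
    intro w hA hB
    rw [hAdef] at hA; rw [hBdef] at hB
    obtain ⟨n, hn⟩ := Set.mem_iUnion.1 (Set.mem_preimage.1 hA)
    obtain ⟨m, hm⟩ := Set.mem_iUnion.1 (Set.mem_preimage.1 hB)
    rcases lt_or_gt_of_ne (show 2*n ≠ 2*m+1 by omega) with h | h
    · exact hJdisj _ _ h _ hn hm
    · exact hJdisj _ _ h _ hm hn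
  have hxA : x ∈ closure A := by
    rw [Metric.mem_closure_iff]
    intro δ hδ
    obtain ⟨n, hn⟩ := hrtend δ hδ
    exact ⟨z (2*n), hzA n, by rw [dist_comm]; exact hn⟩
  have hxB : x ∈ closure B := by
    rw [Metric.mem_closure_iff]
    intro δ hδ
    obtain ⟨n, hn⟩ := hrtend δ hδ
    refine ⟨z (2*n+1), hzB n, ?_⟩
    rw [dist_comm]
    have h1 := hrhalf (2*n)
    have h2 := hr0 (2*n)
    show r (2*n+1) < δ
    linarith
  have hclsub : closure A ⊆ V' := by
    have hsub : A ⊆ Metric.closedBall x (ε/2) := by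
      intro w hw
      rw [hAdef] at hw
      obtain ⟨n, hn⟩ := Set.mem_iUnion.1 (Set.mem_preimage.1 hw)
      have h1 : r (2*n) ≤ r 0 := anti.antitone (Nat.zero_le _)
      have h2 : dist w x < (3/2) * r (2*n) := hn.2
      rw [Metric.mem_closedBall]
      linarith
    calc closure A ⊆ Metric.closedBall x (ε/2) :=
          closure_minimal hsub Metric.isClosed_closedBall
      _ ⊆ Metric.ball x ε := Metric.closedBall_subset_ball (by linarith)
      _ ⊆ V' := hball
  refine ⟨A, hAopen, ⟨z 0, by simpa using hzA 0⟩, hclsub, ?_⟩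
  intro hop
  obtain ⟨w, hwA, hwB⟩ := (_root_.mem_closure_iff.1 hxB) (closure A) hop hxA
  obtain ⟨v, hvB, hvA⟩ := (_root_.mem_closure_iff.1 hwA) B hBopen hwB
  exact hAB v hvA hvB

/-- Selection step of Theorem 3.3: in a second countable, locally compact Hausdorff space
with no isolated points, every nonempty open subset `V'` contains the closure of a
nonempty open subset `V` whose closure is not open. -/
theorem stmt_9 (X : Type*) [TopologicalSpace X] [SecondCountableTopology X]
    [LocallyCompactSpace X] [T2Space X]
    (hX : ∀ x : X, ¬ IsOpen ({x} : Set X)) :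
    ∀ V' : Set X, IsOpen V' → V'.Nonempty →
      ∃ V : Set X, IsOpen V ∧ V.Nonempty ∧ closure V ⊆ V' ∧ ¬ IsOpen (closure V) := by
  haveI : TopologicalSpace.MetrizableSpace X := inferInstance
  letI : MetricSpace X := TopologicalSpace.metrizableSpaceMetric X
  exact aux_metric hX
end
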